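/- Let T = S[y_1,...,y_m,z] with S = k[x_1,...,x_n] and I = (f_1,...,f_m). Set C = (y_1^2 - z f_1^2,..., y_m^2 - z f_m^2). Then (C + (g_m^odd)) : (g_m^even) = IT + (y_1,...,y_m). -/

import Mathlib

open MvPolynomial

/-- `g m even = Σ_{S ⊆ {1,…,m}, |S| even} y^{S̄} f^S z^{|S|/2}`. -/
def gEvenFull {T : Type*} [CommRing T] {m : ℕ} (Y F : Fin m → T) (Z : T) : T :=
  ∑ S ∈ Finset.univ.powerset.filter (fun S : Finset (Fin m) => Even S.card),
    (∏ i ∈ Sᶜ, Y i) * (∏ i ∈ S, F i) * Z ^ (S.card / 2)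

/-- `g m odd = Σ_{S ⊆ {1,…,m}, |S| odd} y^{S̄} f^S z^{(|S|-1)/2}`. -/
def gOddFull {T : Type*} [CommRing T] {m : ℕ} (Y F : Fin m → T) (Z : T) : T :=
  ∑ S ∈ Finset.univ.powerset.filter (fun S : Finset (Fin m) => Odd S.card),
    (∏ i ∈ Sᶜ, Y i) * (∏ i ∈ S, F i) * Z ^ ((S.card - 1) / 2)

namespace ColonAux

variable {T : Type*} [CommRing T] {m : ℕ} (Y F : Fin m → T) (Z : T)

/-- `gE` over an arbitrary index finset. -/
def gE (U : Finset (Fin m)) : T :=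
  ∑ S ∈ U.powerset.filter (fun S => Even S.card),
    (∏ i ∈ U \ S, Y i) * (∏ i ∈ S, F i) * Z ^ (S.card / 2)

/-- `gO` over an arbitrary index finset. -/
def gO (U : Finset (Fin m)) : T :=
  ∑ S ∈ U.powerset.filter (fun S => Odd S.card),
    (∏ i ∈ U \ S, Y i) * (∏ i ∈ S, F i) * Z ^ ((S.card - 1) / 2)

lemma gEvenFull_eq : gEvenFull Y F Z = gE Y F Z Finset.univ := by
  simp [gEvenFull, gE, Finset.compl_eq_univ_sdiff]

lemma gOddFull_eq : gOddFull Y F Z = gO Y F Z Finset.univ := by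
  simp [gOddFull, gO, Finset.compl_eq_univ_sdiff]

lemma insert_sdiff_insert' {a : Fin m} {U S : Finset (Fin m)} (ha : a ∉ U) :
    insert a U \ insert a S = U \ S := by
  ext x
  by_cases hx : x = a
  · subst hx; simp [ha]
  · simp [Finset.mem_sdiff, Finset.mem_insert, hx]

lemma gE_insert {a : Fin m} {U : Finset (Fin m)} (ha : a ∉ U) :
    gE Y F Z (insert a U) = Y a * gE Y F Z U + Z * F a * gO Y F Z U := by
  classical
  rw [gE, gE, gO, Finset.sum_filter, Finset.sum_filter, Finset.sum_filter,
    Finset.sum_powerset_insert ha, Finset.mul_sum, Finset.mul_sum]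
  congr 1
  · refine Finset.sum_congr rfl fun S hS => ?_
    rw [Finset.mem_powerset] at hS
    have haS : a ∉ S := fun h => ha (hS h)
    have haUS : a ∉ U \ S := by simp [ha]
    rw [Finset.insert_sdiff_of_notMem _ haS, Finset.prod_insert haUS]
    split_ifs with h
    · ring
    · simp
  · refine Finset.sum_congr rfl fun S hS => ?_
    rw [Finset.mem_powerset] at hS
    have haS : a ∉ S := fun h => ha (hS h)
    have hcard : (insert a S).card = S.card + 1 := Finset.card_insert_of_notMem haS
    rw [insert_sdiff_insert' ha, hcard, Finset.prod_insert haS]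
    by_cases h : Odd S.card
    · rw [if_pos (by simpa [Nat.even_add_one, Nat.not_even_iff_odd] using h), if_pos h]
      obtain ⟨c, hc⟩ := h
      have h1 : (S.card + 1) / 2 = (S.card - 1) / 2 + 1 := by omega
      rw [h1, pow_succ]
      ring
    · rw [if_neg (by simpa [Nat.even_add_one, Nat.not_even_iff_odd] using h), if_neg h,
        mul_zero]

lemma gO_insert {a : Fin m} {U : Finset (Fin m)} (ha : a ∉ U) :
    gO Y F Z (insert a U) = Y a * gO Y F Z U + F a * gE Y F Z U := by
  classical
  rw [gO, gO, gE, Finset.sum_filter, Finset.sum_filter, Finset.sum_filter,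
    Finset.sum_powerset_insert ha, Finset.mul_sum, Finset.mul_sum]
  congr 1
  · refine Finset.sum_congr rfl fun S hS => ?_
    rw [Finset.mem_powerset] at hS
    have haS : a ∉ S := fun h => ha (hS h)
    have haUS : a ∉ U \ S := by simp [ha]
    rw [Finset.insert_sdiff_of_notMem _ haS, Finset.prod_insert haUS]
    split_ifs with h
    · ring
    · simp
  · refine Finset.sum_congr rfl fun S hS => ?_
    rw [Finset.mem_powerset] at hS
    have haS : a ∉ S := fun h => ha (hS h)
    have hcard : (insert a S).card = S.card + 1 := Finset.card_insert_of_notMem haS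
    rw [insert_sdiff_insert' ha, hcard, Finset.prod_insert haS]
    by_cases h : Even S.card
    · rw [if_pos (by simpa [Nat.odd_add_one, Nat.not_odd_iff_even] using h), if_pos h]
      have h1 : (S.card + 1 - 1) / 2 = S.card / 2 := by omega
      rw [h1]
      ring
    · rw [if_neg (by simpa [Nat.odd_add_one, Nat.not_odd_iff_even] using h), if_neg h,
        mul_zero]

lemma map_gEvenFull {T' : Type*} [CommRing T'] (φ : T →+* T') :
    φ (gEvenFull Y F Z) = gEvenFull (φ ∘ Y) (φ ∘ F) (φ Z) := by
  simp [gEvenFull, map_sum, map_mul, map_prod, map_pow, Function.comp]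

lemma map_gOddFull {T' : Type*} [CommRing T'] (φ : T →+* T') :
    φ (gOddFull Y F Z) = gOddFull (φ ∘ Y) (φ ∘ F) (φ Z) := by
  simp [gOddFull, map_sum, map_mul, map_prod, map_pow, Function.comp]

lemma gEvenFull_zero : gEvenFull Y (fun _ => (0 : T)) Z = ∏ i, Y i := by
  classical
  rw [gEvenFull]
  rw [Finset.sum_eq_single (∅ : Finset (Fin m))]
  · simp
  · intro S hS hne
    obtain ⟨i, hi⟩ := Finset.nonempty_iff_ne_empty.mpr hne
    rw [Finset.prod_eq_zero hi rfl]
    ring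
  · intro hS
    exact absurd (by simp) hS

lemma gOddFull_zero : gOddFull Y (fun _ => (0 : T)) Z = 0 := by
  classical
  rw [gOddFull]
  apply Finset.sum_eq_zero
  intro S hS
  rw [Finset.mem_filter] at hS
  have : S.Nonempty := Finset.card_pos.mp hS.2.pos
  obtain ⟨i, hi⟩ := this
  rw [Finset.prod_eq_zero hi rfl]
  ring

lemma prod_X_monomial {σ R : Type*} [CommSemiring R] {ι : Type*} (s : Finset ι) (g : ι → σ) :
    ∏ i ∈ s, (X (g i) : MvPolynomial σ R) =
      monomial (∑ i ∈ s, Finsupp.single (g i) 1) 1 := by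
  classical
  induction s using Finset.cons_induction with
  | empty => simp [monomial_zero', C_1]
  | cons a s ha ih =>
      rw [Finset.prod_cons, Finset.sum_cons, ih, ← pow_one (X (g a) : MvPolynomial σ R),
        X_pow_eq_monomial, monomial_mul, one_mul]

lemma key {A : Type*} [CommRing A] {m : ℕ} {e : MvPolynomial (Option (Fin m)) A}
    (he : e * ∏ i : Fin m, X (some i) ∈
      Ideal.span (Set.range fun i : Fin m =>
        (X (some i) : MvPolynomial (Option (Fin m)) A) ^ 2)) :
    e ∈ Ideal.span (Set.range fun i : Fin m =>
      (X (some i) : MvPolynomial (Option (Fin m)) A)) := by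
  classical
  have hsq : (Set.range fun i : Fin m => (X (some i) : MvPolynomial (Option (Fin m)) A) ^ 2)
      = (fun s => monomial s (1 : A)) ''
          (Set.range fun i : Fin m => Finsupp.single (some i : Option (Fin m)) 2) := by
    rw [← Set.range_comp]
    apply congrArg
    funext i
    simp [Function.comp, X_pow_eq_monomial]
  have hX : (Set.range fun i : Fin m => (X (some i) : MvPolynomial (Option (Fin m)) A))
      = X '' (Set.range (some : Fin m → Option (Fin m))) := by
    rw [← Set.range_comp]; rfl
  rw [hsq, mem_ideal_span_monomial_image] at he
  rw [hX, mem_ideal_span_X_image]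
  intro d hd
  set D : Option (Fin m) →₀ ℕ := ∑ i : Fin m, Finsupp.single (some i) 1 with hD
  have hprod : (∏ i : Fin m, (X (some i) : MvPolynomial (Option (Fin m)) A)) = monomial D 1 :=
    prod_X_monomial _ _
  have hmem : d + D ∈
      (e * ∏ i : Fin m, (X (some i) : MvPolynomial (Option (Fin m)) A)).support := by
    rw [hprod, mem_support_iff, coeff_mul_monomial, mul_one]
    exact mem_support_iff.mp hd
  obtain ⟨s, ⟨i, rfl⟩, hle⟩ := he (d + D) hmem
  refine ⟨some i, ⟨i, rfl⟩, ?_⟩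
  have h1 : (Finsupp.single (some i : Option (Fin m)) 2) (some i) ≤ (d + D) (some i) := hle _
  have hDi : D (some i) = 1 := by
    rw [hD, Finsupp.finset_sum_apply]
    rw [Finset.sum_eq_single i (fun j _ hj => by
      simp [Finsupp.single_apply, Option.some_inj, hj]) (by simp)]
    simp
  simp only [Finsupp.single_eq_same, Finsupp.add_apply, hDi] at h1
  omega

end ColonAux

set_option maxHeartbeats 1000000
set_option synthInstance.maxHeartbeats 200000

/-- **Lemma (SES, second part).** -/
theorem colon_gEven_eq_IT_sup_y
    (k : Type*) [Field k] (n m : ℕ) (f : Fin m → MvPolynomial (Fin n) k) :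
    ∀ h : MvPolynomial (Option (Fin m)) (MvPolynomial (Fin n) k),
      h * gEvenFull (fun i => X (some i)) (fun i => MvPolynomial.C (f i)) (X none) ∈
        Ideal.span (Set.range fun i : Fin m =>
            (X (some i)) ^ 2 - X none * MvPolynomial.C (f i) ^ 2) ⊔
          Ideal.span {gOddFull (fun i => X (some i)) (fun i => MvPolynomial.C (f i)) (X none)} ↔
      h ∈ Ideal.map (algebraMap (MvPolynomial (Fin n) k)
              (MvPolynomial (Option (Fin m)) (MvPolynomial (Fin n) k)))
            (Ideal.span (Set.range f)) ⊔
          Ideal.span (Set.range fun i : Fin m =>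
            (X (some i) : MvPolynomial (Option (Fin m)) (MvPolynomial (Fin n) k))) := by
  classical
  intro h
  let R := MvPolynomial (Fin n) k
  let I : Ideal R := Ideal.span (Set.range f)
  let q : R →+* R ⧸ I := Ideal.Quotient.mk I
  let ψ : MvPolynomial (Option (Fin m)) R →+* MvPolynomial (Option (Fin m)) (R ⧸ I) :=
    MvPolynomial.map q
  have hqf : ∀ i, q (f i) = 0 := fun i =>
    Ideal.Quotient.eq_zero_iff_mem.mpr (Ideal.subset_span ⟨i, rfl⟩)
  have hψF : (⇑ψ ∘ fun i : Fin m => (MvPolynomial.C (f i) : MvPolynomial (Option (Fin m)) R))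
      = fun _ => (0 : MvPolynomial (Option (Fin m)) (R ⧸ I)) := by
    funext i
    show MvPolynomial.map q (MvPolynomial.C (f i)) = 0
    rw [MvPolynomial.map_C, hqf i, MvPolynomial.C_0]
  have hψY : (⇑ψ ∘ fun i : Fin m => (X (some i) : MvPolynomial (Option (Fin m)) R))
      = fun i : Fin m => (X (some i) : MvPolynomial (Option (Fin m)) (R ⧸ I)) := by
    funext i
    show MvPolynomial.map q (X (some i)) = X (some i)
    rw [MvPolynomial.map_X]
  have hψZ : ψ (X none) = X none := by
    show MvPolynomial.map q (X none) = X none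
    rw [MvPolynomial.map_X]
  have hgE : ψ (gEvenFull (fun i : Fin m => X (some i))
      (fun i => MvPolynomial.C (f i)) (X none)) = ∏ i : Fin m, X (some i) := by
    rw [ColonAux.map_gEvenFull (T := MvPolynomial (Option (Fin m)) R)
      (T' := MvPolynomial (Option (Fin m)) (R ⧸ I)) (φ := ψ), hψF, hψY, hψZ, ColonAux.gEvenFull_zero]
  have hgO : ψ (gOddFull (fun i : Fin m => X (some i))
      (fun i => MvPolynomial.C (f i)) (X none)) = 0 := by
    rw [ColonAux.map_gOddFull (T := MvPolynomial (Option (Fin m)) R)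
      (T' := MvPolynomial (Option (Fin m)) (R ⧸ I)) (φ := ψ), hψF, hψY, hψZ, ColonAux.gOddFull_zero]
  constructor
  · intro hmem
    have h2 := Ideal.mem_map_of_mem ψ hmem
    rw [Ideal.map_sup] at h2
    have hC : Ideal.map ψ (Ideal.span (Set.range fun i : Fin m =>
        (X (some i) : MvPolynomial (Option (Fin m)) R) ^ 2
          - X none * MvPolynomial.C (f i) ^ 2)) =
        Ideal.span (Set.range fun i : Fin m =>
          (X (some i) : MvPolynomial (Option (Fin m)) (R ⧸ I)) ^ 2) := by
      rw [Ideal.map_span, ← Set.range_comp]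
      have : (⇑ψ ∘ fun i : Fin m => (X (some i) : MvPolynomial (Option (Fin m)) R) ^ 2
          - X none * MvPolynomial.C (f i) ^ 2) =
          fun i : Fin m => (X (some i) : MvPolynomial (Option (Fin m)) (R ⧸ I)) ^ 2 := by
        funext i
        show MvPolynomial.map q _ = _
        rw [map_sub, map_pow, map_mul, map_pow, MvPolynomial.map_X, MvPolynomial.map_X,
          MvPolynomial.map_C, hqf i, MvPolynomial.C_0]
        ring
      rw [this]
    have hO : Ideal.map ψ (Ideal.span {gOddFull (fun i : Fin m => X (some i))
        (fun i => MvPolynomial.C (f i)) (X none)}) = ⊥ := by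
      rw [Ideal.map_span, Set.image_singleton, hgO, Ideal.span_singleton_eq_bot]
    rw [hC, hO, sup_bot_eq, map_mul, hgE] at h2
    have h3 := ColonAux.key h2
    have hmapY : Ideal.map ψ (Ideal.span (Set.range fun i : Fin m =>
        (X (some i) : MvPolynomial (Option (Fin m)) R))) =
        Ideal.span (Set.range fun i : Fin m =>
          (X (some i) : MvPolynomial (Option (Fin m)) (R ⧸ I))) := by
      rw [Ideal.map_span, ← Set.range_comp, hψY]
    have hsurj : Function.Surjective ψ :=
      MvPolynomial.map_surjective q Ideal.Quotient.mk_surjective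
    have h4 : h ∈ Ideal.comap ψ (Ideal.map ψ (Ideal.span (Set.range fun i : Fin m =>
        (X (some i) : MvPolynomial (Option (Fin m)) R)))) := by
      rw [Ideal.mem_comap, hmapY]
      exact h3
    rw [Ideal.comap_map_of_surjective ψ hsurj, ← RingHom.ker_eq_comap_bot,
      MvPolynomial.ker_map, Ideal.mk_ker] at h4
    rw [MvPolynomial.algebraMap_eq, sup_comm]
    exact h4
  · intro hmem
    have hsub : Ideal.map (algebraMap R (MvPolynomial (Option (Fin m)) R)) I ⊔
        Ideal.span (Set.range fun i : Fin m =>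
          (X (some i) : MvPolynomial (Option (Fin m)) R)) ≤
        (Ideal.span (Set.range fun i : Fin m =>
            (X (some i) : MvPolynomial (Option (Fin m)) R) ^ 2
              - X none * MvPolynomial.C (f i) ^ 2) ⊔
          Ideal.span {gOddFull (fun i : Fin m => X (some i))
            (fun i => MvPolynomial.C (f i)) (X none)}).colon
          (Ideal.span {gEvenFull (fun i : Fin m => X (some i))
            (fun i => MvPolynomial.C (f i)) (X none)}) := by
      apply sup_le
      · rw [MvPolynomial.algebraMap_eq, show I = Ideal.span (Set.range f) from rfl,
          Ideal.map_span, ← Set.range_comp, Ideal.span_le]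
        rintro x ⟨j, rfl⟩
        rw [SetLike.mem_coe, Ideal.mem_colon_span_singleton]
        have hins : insert j (Finset.univ.erase j) = Finset.univ :=
          Finset.insert_erase (Finset.mem_univ j)
        have hjU' : j ∉ Finset.univ.erase j := Finset.notMem_erase j _
        have h1 : gEvenFull (fun i : Fin m => X (some i))
            (fun i => MvPolynomial.C (f i)) (X none) =
            X (some j) * ColonAux.gE (fun i : Fin m => X (some i))
              (fun i => MvPolynomial.C (f i)) (X none) (Finset.univ.erase j) +
            X none * MvPolynomial.C (f j) * ColonAux.gO (fun i : Fin m => X (some i))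
              (fun i => MvPolynomial.C (f i)) (X none) (Finset.univ.erase j) := by
          have := ColonAux.gE_insert (fun i : Fin m => X (some i))
            (fun i => MvPolynomial.C (f i)) (X none) hjU'
          rw [hins] at this
          rw [ColonAux.gEvenFull_eq, this]
        have h2 : gOddFull (fun i : Fin m => X (some i))
            (fun i => MvPolynomial.C (f i)) (X none) =
            X (some j) * ColonAux.gO (fun i : Fin m => X (some i))
              (fun i => MvPolynomial.C (f i)) (X none) (Finset.univ.erase j) +
            MvPolynomial.C (f j) * ColonAux.gE (fun i : Fin m => X (some i))
              (fun i => MvPolynomial.C (f i)) (X none) (Finset.univ.erase j) := by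
          have := ColonAux.gO_insert (fun i : Fin m => X (some i))
            (fun i => MvPolynomial.C (f i)) (X none) hjU'
          rw [hins] at this
          rw [ColonAux.gOddFull_eq, this]
        have hid : (⇑(MvPolynomial.C : R →+* MvPolynomial (Option (Fin m)) R) ∘ f) j *
            gEvenFull (fun i : Fin m => X (some i))
              (fun i => MvPolynomial.C (f i)) (X none) =
            X (some j) * gOddFull (fun i : Fin m => X (some i))
              (fun i => MvPolynomial.C (f i)) (X none) -
            ColonAux.gO (fun i : Fin m => X (some i))
              (fun i => MvPolynomial.C (f i)) (X none) (Finset.univ.erase j) *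
              ((X (some j)) ^ 2 - X none * MvPolynomial.C (f j) ^ 2) := by
          show MvPolynomial.C (f j) * _ = _
          rw [h1, h2]; ring
        rw [hid]
        refine Ideal.sub_mem _ ?_ ?_
        · exact Ideal.mem_sup_right (Ideal.mul_mem_left _ _ (Ideal.subset_span rfl))
        · exact Ideal.mem_sup_left (Ideal.mul_mem_left _ _ (Ideal.subset_span ⟨j, rfl⟩))
      · rw [Ideal.span_le]
        rintro x ⟨j, rfl⟩
        rw [SetLike.mem_coe, Ideal.mem_colon_span_singleton]
        have hins : insert j (Finset.univ.erase j) = Finset.univ :=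
          Finset.insert_erase (Finset.mem_univ j)
        have hjU' : j ∉ Finset.univ.erase j := Finset.notMem_erase j _
        have h1 : gEvenFull (fun i : Fin m => X (some i))
            (fun i => MvPolynomial.C (f i)) (X none) =
            X (some j) * ColonAux.gE (fun i : Fin m => X (some i))
              (fun i => MvPolynomial.C (f i)) (X none) (Finset.univ.erase j) +
            X none * MvPolynomial.C (f j) * ColonAux.gO (fun i : Fin m => X (some i))
              (fun i => MvPolynomial.C (f i)) (X none) (Finset.univ.erase j) := by
          have := ColonAux.gE_insert (fun i : Fin m => X (some i))
            (fun i => MvPolynomial.C (f i)) (X none) hjU'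
          rw [hins] at this
          rw [ColonAux.gEvenFull_eq, this]
        have h2 : gOddFull (fun i : Fin m => X (some i))
            (fun i => MvPolynomial.C (f i)) (X none) =
            X (some j) * ColonAux.gO (fun i : Fin m => X (some i))
              (fun i => MvPolynomial.C (f i)) (X none) (Finset.univ.erase j) +
            MvPolynomial.C (f j) * ColonAux.gE (fun i : Fin m => X (some i))
              (fun i => MvPolynomial.C (f i)) (X none) (Finset.univ.erase j) := by
          have := ColonAux.gO_insert (fun i : Fin m => X (some i))
            (fun i => MvPolynomial.C (f i)) (X none) hjU'
          rw [hins] at this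
          rw [ColonAux.gOddFull_eq, this]
        have hid : (X (some j) : MvPolynomial (Option (Fin m)) R) *
            gEvenFull (fun i : Fin m => X (some i))
              (fun i => MvPolynomial.C (f i)) (X none) =
            ColonAux.gE (fun i : Fin m => X (some i))
              (fun i => MvPolynomial.C (f i)) (X none) (Finset.univ.erase j) *
              ((X (some j)) ^ 2 - X none * MvPolynomial.C (f j) ^ 2) +
            (X none * MvPolynomial.C (f j)) * gOddFull (fun i : Fin m => X (some i))
              (fun i => MvPolynomial.C (f i)) (X none) := by
          rw [h1, h2]; ring
        rw [hid]
        refine Ideal.add_mem _ ?_ ?_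
        · exact Ideal.mem_sup_left (Ideal.mul_mem_left _ _ (Ideal.subset_span ⟨j, rfl⟩))
        · exact Ideal.mem_sup_right (Ideal.mul_mem_left _ _ (Ideal.subset_span rfl))
    exact Ideal.mem_colon_span_singleton.mp (hsub hmem)
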